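/- Let R : (0,∞) → ℝ with 0 ≤ R(θ)/θ ≤ c < 1 for all θ > 0, and let D : (0,∞) → ℝ be measurable with 1 ≤ D(s) ≤ 1/(1−c) for all s. Then the function (MD)(θ) = D̄(θ)/(D̄(θ) − R(θ)/θ), with D̄(θ) = (1/θ)∫₀^θ D(s) ds, also satisfies 1 ≤ (MD)(θ) ≤ 1/(1−c) for all θ > 0. -/

import Mathlib

theorem map_preserves_bounds (R : ℝ → ℝ) (c : ℝ) (hc0 : 0 ≤ c) (hc1 : c < 1)
    (hR : ∀ θ : ℝ, 0 < θ → 0 ≤ R θ / θ ∧ R θ / θ ≤ c)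
    (D : ℝ → ℝ) (hDmeas : Measurable D)
    (hD : ∀ s : ℝ, 0 < s → 1 ≤ D s ∧ D s ≤ 1 / (1 - c)) :
    ∀ θ : ℝ, 0 < θ →
      1 ≤ ((1 / θ) * ∫ s in (0:ℝ)..θ, D s) /
            ((1 / θ) * (∫ s in (0:ℝ)..θ, D s) - R θ / θ) ∧
      ((1 / θ) * ∫ s in (0:ℝ)..θ, D s) /
            ((1 / θ) * (∫ s in (0:ℝ)..θ, D s) - R θ / θ) ≤ 1 / (1 - c) := by
  intro θ hθ
  have h1c : (0:ℝ) < 1 - c := by linarith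
  have hcinv : (1:ℝ) ≤ 1 / (1 - c) := by
    rw [le_div_iff₀ h1c]; linarith
  -- integrability on Ioc 0 θ
  have hInt : MeasureTheory.IntegrableOn D (Set.Ioc 0 θ) := by
    apply MeasureTheory.Measure.integrableOn_of_bounded
    · simp [Real.volume_Ioc]
    · exact hDmeas.aestronglyMeasurable
    · filter_upwards [MeasureTheory.ae_restrict_mem measurableSet_Ioc] with s hs
      have := hD s hs.1
      rw [Real.norm_eq_abs, abs_le]
      constructor <;> nlinarith [this.1, this.2]
  have hconst : ∀ k : ℝ, MeasureTheory.IntegrableOn (fun _ : ℝ => k) (Set.Ioc 0 θ) := by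
    intro k
    exact (MeasureTheory.integrableOn_const_iff).mpr (Or.inr (by simp [Real.volume_Ioc]))
  have hIeq : (∫ s in (0:ℝ)..θ, D s) = ∫ s in Set.Ioc (0:ℝ) θ, D s :=
    intervalIntegral.integral_of_le hθ.le
  have hlow : θ ≤ ∫ s in (0:ℝ)..θ, D s := by
    rw [hIeq]
    have : (∫ s in Set.Ioc (0:ℝ) θ, (1:ℝ)) ≤ ∫ s in Set.Ioc (0:ℝ) θ, D s := by
      apply MeasureTheory.setIntegral_mono_on (hconst 1) hInt measurableSet_Ioc
      intro s hs; exact (hD s hs.1).1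
    simpa [Real.volume_Ioc, hθ.le] using this
  have hhigh : (∫ s in (0:ℝ)..θ, D s) ≤ θ * (1 / (1 - c)) := by
    rw [hIeq]
    have : (∫ s in Set.Ioc (0:ℝ) θ, D s) ≤ ∫ s in Set.Ioc (0:ℝ) θ, (1 / (1 - c)) := by
      apply MeasureTheory.setIntegral_mono_on hInt (hconst _) measurableSet_Ioc
      intro s hs; exact (hD s hs.1).2
    simpa [Real.volume_Ioc, hθ.le] using this
  set I : ℝ := ∫ s in (0:ℝ)..θ, D s with hI
  set Dbar : ℝ := (1 / θ) * I with hDbar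
  have hDbar1 : 1 ≤ Dbar := by
    rw [hDbar, one_div, inv_mul_eq_div, le_div_iff₀ hθ]; linarith
  have hDbar2 : Dbar ≤ 1 / (1 - c) := by
    rw [hDbar, one_div, inv_mul_eq_div, div_le_iff₀ hθ]; linarith
  obtain ⟨ha0, hac⟩ := hR θ hθ
  set a : ℝ := R θ / θ
  have hden : 0 < Dbar - a := by nlinarith
  constructor
  · rw [le_div_iff₀ hden]; nlinarith
  · rw [div_le_div_iff₀ hden h1c]; nlinarith
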